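/- Let n be a natural number and 0 < p_b < p_a < 1, with q_a = 1−p_a, q_b = 1−p_b. Let Y₁ ~ Binomial(n, p_a), Y₂ ~ Binomial(n, p_b) and ε uniform on {−1, +1} be mutually independent, and set X = ε·(Y₁ − Y₂). Let t* = (1/2)·ln(p_a q_b/(q_a p_b)) and C = (1/2)·(√(p_a p_b)+√(q_a q_b))^{2n} + (1/2)·(√(q_a³p_b³/(p_a q_b)) + √(p_a³q_b³/(q_a p_b)) + q_a q_b + p_a p_b)^{n}. Then for every real s, P(X ≥ s) ≤ C·e^{−s t*}. -/

import Mathlib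

open MeasureTheory ProbabilityTheory

lemma binom_mgf_tsum (n : ℕ) (p : ℝ) (hp : 0 ≤ p) (hq : 0 ≤ 1 - p) (u : ℝ) :
    ∑' i : ℕ, ENNReal.ofReal (Real.exp (u * i) * ((n.choose i : ℝ) * p ^ i * (1 - p) ^ (n - i)))
      = ENNReal.ofReal ((p * Real.exp u + (1 - p)) ^ n) := by
  rw [tsum_eq_sum (s := Finset.range (n+1))
    (by
      intro i hi
      have : n < i := by simpa using Finset.mem_range.not.mp hi
      rw [Nat.choose_eq_zero_of_lt this]
      simp)]
  rw [← ENNReal.ofReal_sum_of_nonneg (by intro i _; positivity)]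
  congr 1
  rw [add_pow]
  refine Finset.sum_congr rfl fun i _ => ?_
  rw [mul_pow, mul_comm u (i:ℝ), Real.exp_nat_mul]
  ring

lemma double_sum_mgf (n : ℕ) (pa pb : ℝ) (ha0 : 0 ≤ pa) (ha1 : pa ≤ 1)
    (hb0 : 0 ≤ pb) (hb1 : pb ≤ 1) (t : ℝ) :
    (∑' i : ℕ, ∑' j : ℕ, ENNReal.ofReal (Real.exp (t * ((i : ℝ) - j))) *
      (ENNReal.ofReal ((n.choose i : ℝ) * pa ^ i * (1 - pa) ^ (n - i)) *
       ENNReal.ofReal ((n.choose j : ℝ) * pb ^ j * (1 - pb) ^ (n - j))))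
    = ENNReal.ofReal ((pa * Real.exp t + (1 - pa)) ^ n *
        (pb * Real.exp (-t) + (1 - pb)) ^ n) := by
  have hqa : (0:ℝ) ≤ 1 - pa := by linarith
  have hqb : (0:ℝ) ≤ 1 - pb := by linarith
  have hPa : ∀ i : ℕ, 0 ≤ (n.choose i : ℝ) * pa ^ i * (1 - pa) ^ (n - i) := fun i =>
    mul_nonneg (mul_nonneg (Nat.cast_nonneg _) (pow_nonneg ha0 _)) (pow_nonneg hqa _)
  have hPb : ∀ i : ℕ, 0 ≤ (n.choose i : ℝ) * pb ^ i * (1 - pb) ^ (n - i) := fun i =>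
    mul_nonneg (mul_nonneg (Nat.cast_nonneg _) (pow_nonneg hb0 _)) (pow_nonneg hqb _)
  have key : ∀ i j : ℕ, ENNReal.ofReal (Real.exp (t * ((i : ℝ) - j))) *
      (ENNReal.ofReal ((n.choose i : ℝ) * pa ^ i * (1 - pa) ^ (n - i)) *
       ENNReal.ofReal ((n.choose j : ℝ) * pb ^ j * (1 - pb) ^ (n - j)))
      = ENNReal.ofReal (Real.exp (t * i) * ((n.choose i : ℝ) * pa ^ i * (1 - pa) ^ (n - i))) *
        ENNReal.ofReal (Real.exp ((-t) * j) * ((n.choose j : ℝ) * pb ^ j * (1 - pb) ^ (n - j))) := by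
    intro i j
    rw [ENNReal.ofReal_mul ((Real.exp_pos _).le), ENNReal.ofReal_mul ((Real.exp_pos _).le)]
    have h : Real.exp (t * ((i:ℝ) - j)) = Real.exp (t * i) * Real.exp ((-t) * j) := by
      rw [← Real.exp_add]; congr 1; ring
    rw [h, ENNReal.ofReal_mul ((Real.exp_pos _).le)]
    ring
  calc (∑' i : ℕ, ∑' j : ℕ, ENNReal.ofReal (Real.exp (t * ((i : ℝ) - j))) *
      (ENNReal.ofReal ((n.choose i : ℝ) * pa ^ i * (1 - pa) ^ (n - i)) *
       ENNReal.ofReal ((n.choose j : ℝ) * pb ^ j * (1 - pb) ^ (n - j))))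
      = ∑' i : ℕ, ENNReal.ofReal (Real.exp (t * i) * ((n.choose i : ℝ) * pa ^ i * (1 - pa) ^ (n - i))) *
          ∑' j : ℕ, ENNReal.ofReal (Real.exp ((-t) * j) * ((n.choose j : ℝ) * pb ^ j * (1 - pb) ^ (n - j))) := by
        refine tsum_congr fun i => ?_
        rw [← ENNReal.tsum_mul_left]
        exact tsum_congr fun j => key i j
    _ = (∑' i : ℕ, ENNReal.ofReal (Real.exp (t * i) * ((n.choose i : ℝ) * pa ^ i * (1 - pa) ^ (n - i)))) *
          ∑' j : ℕ, ENNReal.ofReal (Real.exp ((-t) * j) * ((n.choose j : ℝ) * pb ^ j * (1 - pb) ^ (n - j))) :=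
        ENNReal.tsum_mul_right
    _ = ENNReal.ofReal ((pa * Real.exp t + (1 - pa)) ^ n) *
          ENNReal.ofReal ((pb * Real.exp (-t) + (1 - pb)) ^ n) := by
        rw [binom_mgf_tsum n pa ha0 (by linarith) t, binom_mgf_tsum n pb hb0 (by linarith) (-t)]
    _ = _ := by
        rw [← ENNReal.ofReal_mul (pow_nonneg (add_nonneg (mul_nonneg ha0 (Real.exp_pos _).le) hqa) _)]

/-- Chernoff tail bound for the symmetrized binomial difference: with `Y₁ ~ Bin(n, p_a)`,
`Y₂ ~ Bin(n, p_b)` and `ε` uniform on `{-1, +1}` mutually independent,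
`X = ε·(Y₁ - Y₂)` satisfies `P(X ≥ s) ≤ C·e^{-s t*}` for every real `s`, where
`t* = ½ ln(p_a q_b / (q_a p_b))` and `C` is the explicit concentration constant. -/
theorem chernoff_tail_symmetrized_binomial_difference {Ω : Type*} [MeasurableSpace Ω]
    (μ : Measure Ω) [IsProbabilityMeasure μ]
    (n : ℕ) (p_a p_b : ℝ) (hpb0 : 0 < p_b) (hpba : p_b < p_a) (hpa1 : p_a < 1)
    (Y₁ Y₂ : Ω → ℕ) (ε : Ω → ℝ)
    (hY₁ : Measurable Y₁) (hY₂ : Measurable Y₂) (hε : Measurable ε)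
    (hεval : ∀ ω, ε ω = 1 ∨ ε ω = -1)
    (hεlaw : μ {ω | ε ω = 1} = 1/2 ∧ μ {ω | ε ω = -1} = 1/2)
    (hindep12 : IndepFun Y₁ Y₂ μ)
    (hindepε : IndepFun (fun ω => (Y₁ ω, Y₂ ω)) ε μ)
    (hlaw₁ : ∀ i : ℕ, μ {ω | Y₁ ω = i} =
      ENNReal.ofReal ((n.choose i : ℝ) * p_a ^ i * (1 - p_a) ^ (n - i)))
    (hlaw₂ : ∀ i : ℕ, μ {ω | Y₂ ω = i} =
      ENNReal.ofReal ((n.choose i : ℝ) * p_b ^ i * (1 - p_b) ^ (n - i)))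
    (q_a q_b tstar C : ℝ) (hqa : q_a = 1 - p_a) (hqb : q_b = 1 - p_b)
    (htstar : tstar = (1/2) * Real.log ((p_a * q_b) / (q_a * p_b)))
    (hC : C = (1/2) * (Real.sqrt (p_a * p_b) + Real.sqrt (q_a * q_b)) ^ (2*n) +
        (1/2) * (Real.sqrt (q_a^3 * p_b^3 / (p_a * q_b)) +
          Real.sqrt (p_a^3 * q_b^3 / (q_a * p_b)) + q_a * q_b + p_a * p_b) ^ n)
    (s : ℝ) :
    μ {ω | s ≤ ε ω * ((Y₁ ω : ℝ) - (Y₂ ω : ℝ))} ≤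
      ENNReal.ofReal (C * Real.exp (-(s * tstar))) := by
  have hpa0 : 0 < p_a := lt_trans hpb0 hpba
  have hpb1 : p_b < 1 := lt_trans hpba hpa1
  have hqa0 : 0 < q_a := by rw [hqa]; linarith
  have hqb0 : 0 < q_b := by rw [hqb]; linarith
  have hratio : 1 < (p_a * q_b) / (q_a * p_b) := by
    rw [lt_div_iff₀ (by positivity)]
    rw [hqa, hqb]; nlinarith
  have ht : 0 < tstar := by
    rw [htstar]
    have := Real.log_pos hratio
    linarith
  set f : Ω → ENNReal := fun ω => ENNReal.ofReal (Real.exp (tstar * (ε ω * ((Y₁ ω : ℝ) - Y₂ ω)))) with hf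
  have hfm : Measurable f := by
    apply ENNReal.measurable_ofReal.comp
    apply Real.measurable_exp.comp
    exact measurable_const.mul (hε.mul (((measurable_from_nat (f := fun n : ℕ => (n:ℝ))).comp hY₁).sub ((measurable_from_nat (f := fun n : ℕ => (n:ℝ))).comp hY₂)))
  -- Markov
  have hset : {ω | s ≤ ε ω * ((Y₁ ω : ℝ) - (Y₂ ω : ℝ))}
      = {ω | ENNReal.ofReal (Real.exp (tstar * s)) ≤ f ω} := by
    ext ω
    simp only [Set.mem_setOf_eq, hf]
    rw [ENNReal.ofReal_le_ofReal_iff (Real.exp_pos _).le, Real.exp_le_exp]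
    exact ⟨fun h => mul_le_mul_of_nonneg_left h ht.le, fun h => le_of_mul_le_mul_left h ht⟩
  have markov := mul_meas_ge_le_lintegral₀ (μ := μ) hfm.aemeasurable (ENNReal.ofReal (Real.exp (tstar * s)))
  have step1 : μ {ω | s ≤ ε ω * ((Y₁ ω : ℝ) - (Y₂ ω : ℝ))}
      ≤ (∫⁻ ω, f ω ∂μ) / ENNReal.ofReal (Real.exp (tstar * s)) := by
    rw [hset, ENNReal.le_div_iff_mul_le
      (Or.inl (by simp [Real.exp_pos])) (Or.inl ENNReal.ofReal_ne_top)]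
    rw [mul_comm]
    exact markov
  -- compute the integral
  have hint : ∫⁻ ω, f ω ∂μ = ENNReal.ofReal C := by
    classical
    set v : Bool → ℝ := fun b => if b then 1 else -1 with hv
    set S : ℕ × ℕ × Bool → Set Ω := fun k => Y₁ ⁻¹' {k.1} ∩ Y₂ ⁻¹' {k.2.1} ∩ ε ⁻¹' {v k.2.2} with hS
    have hSm : ∀ k, MeasurableSet (S k) := fun k =>
      ((hY₁ (measurableSet_singleton _)).inter (hY₂ (measurableSet_singleton _))).inter
        (hε (measurableSet_singleton _))
    have hvinj : Function.Injective v := by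
      intro b b' h
      cases b <;> cases b' <;> first | rfl | (exfalso; simp only [hv] at h; norm_num at h)
    have hdisj : Pairwise (Function.onFun Disjoint S) := by
      rintro ⟨i, j, b⟩ ⟨i', j', b'⟩ hne
      rw [Function.onFun, Set.disjoint_left]
      rintro ω ⟨⟨h1, h2⟩, h3⟩ ⟨⟨h1', h2'⟩, h3'⟩
      apply hne
      simp only [Set.mem_preimage, Set.mem_singleton_iff] at h1 h2 h3 h1' h2' h3'
      have : v b = v b' := by rw [← h3, ← h3']
      exact Prod.ext (h1 ▸ h1') (Prod.ext (h2 ▸ h2') (hvinj this))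
    have hunion : (⋃ k, S k) = Set.univ := by
      ext ω
      simp only [Set.mem_iUnion, Set.mem_univ, iff_true]
      rcases hεval ω with h | h
      · exact ⟨(Y₁ ω, Y₂ ω, true), by simp [hS, hv, h]⟩
      · exact ⟨(Y₁ ω, Y₂ ω, false), by simp [hS, hv, h]⟩
    have hεhalf : ∀ b : Bool, μ (ε ⁻¹' {v b}) = 1/2 := by
      intro b
      cases b
      · simpa [hv, Set.preimage] using hεlaw.2
      · simpa [hv, Set.preimage] using hεlaw.1
    have hμS : ∀ k : ℕ × ℕ × Bool, μ (S k) =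
        ENNReal.ofReal ((n.choose k.1 : ℝ) * p_a ^ k.1 * (1 - p_a) ^ (n - k.1)) *
        ENNReal.ofReal ((n.choose k.2.1 : ℝ) * p_b ^ k.2.1 * (1 - p_b) ^ (n - k.2.1)) *
        (1/2 : ENNReal) := by
      rintro ⟨i, j, b⟩
      have h1 : S (i, j, b) = (fun ω => (Y₁ ω, Y₂ ω)) ⁻¹' ({(i, j)} : Set (ℕ × ℕ)) ∩ ε ⁻¹' {v b} := by
        ext ω
        simp [hS, Prod.ext_iff, and_assoc]
      have h2 : (fun ω => (Y₁ ω, Y₂ ω)) ⁻¹' ({(i, j)} : Set (ℕ × ℕ)) = Y₁ ⁻¹' {i} ∩ Y₂ ⁻¹' {j} := by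
        ext ω
        simp [Prod.ext_iff]
      rw [h1, hindepε.measure_inter_preimage_eq_mul _ _ (measurableSet_singleton _)
          (measurableSet_singleton _), h2,
        hindep12.measure_inter_preimage_eq_mul _ _ (measurableSet_singleton _)
          (measurableSet_singleton _), hεhalf b]
      congr 1
      congr 1
      · exact hlaw₁ i
      · exact hlaw₂ j
    have key : ∫⁻ ω, f ω ∂μ = ∑' k : ℕ × ℕ × Bool,
        ENNReal.ofReal (Real.exp (tstar * (v k.2.2 * ((k.1 : ℝ) - k.2.1)))) * μ (S k) := by
      rw [← setLIntegral_univ, ← hunion, lintegral_iUnion hSm hdisj]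
      refine tsum_congr fun k => ?_
      rw [setLIntegral_congr_fun (hSm k) (fun ⦃ω⦄ hω => ?_), setLIntegral_const]
      obtain ⟨⟨h1, h2⟩, h3⟩ := hω
      simp only [Set.mem_preimage, Set.mem_singleton_iff] at h1 h2 h3
      simp only [hf, h1, h2, h3]
    rw [key]
    have exp1 : ∀ x : ℝ, tstar * (v true * x) = tstar * x := by intro x; simp only [hv]; norm_num
    have exp2 : ∀ x : ℝ, tstar * (v false * x) = (-tstar) * x := by intro x; simp only [hv]; norm_num
    calc ∑' k : ℕ × ℕ × Bool,
        ENNReal.ofReal (Real.exp (tstar * (v k.2.2 * ((k.1 : ℝ) - k.2.1)))) * μ (S k)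
        = ∑' i : ℕ, ∑' j : ℕ, ∑' b : Bool,
            ENNReal.ofReal (Real.exp (tstar * (v b * ((i : ℝ) - j)))) * μ (S (i, j, b)) := by
          rw [ENNReal.tsum_prod']
          exact tsum_congr fun i => ENNReal.tsum_prod'
      _ = ∑' i : ℕ, ∑' j : ℕ,
            (ENNReal.ofReal (Real.exp ((-tstar) * ((i : ℝ) - j))) *
              (ENNReal.ofReal ((n.choose i : ℝ) * p_a ^ i * (1 - p_a) ^ (n - i)) *
               ENNReal.ofReal ((n.choose j : ℝ) * p_b ^ j * (1 - p_b) ^ (n - j))) * (1/2) +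
             ENNReal.ofReal (Real.exp (tstar * ((i : ℝ) - j))) *
              (ENNReal.ofReal ((n.choose i : ℝ) * p_a ^ i * (1 - p_a) ^ (n - i)) *
               ENNReal.ofReal ((n.choose j : ℝ) * p_b ^ j * (1 - p_b) ^ (n - j))) * (1/2)) := by
          refine tsum_congr fun i => tsum_congr fun j => ?_
          rw [tsum_bool, hμS (i, j, false), hμS (i, j, true), exp1, exp2]
          ring
      _ = (∑' i : ℕ, ∑' j : ℕ,
            ENNReal.ofReal (Real.exp ((-tstar) * ((i : ℝ) - j))) *
              (ENNReal.ofReal ((n.choose i : ℝ) * p_a ^ i * (1 - p_a) ^ (n - i)) *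
               ENNReal.ofReal ((n.choose j : ℝ) * p_b ^ j * (1 - p_b) ^ (n - j)))) * (1/2) +
          (∑' i : ℕ, ∑' j : ℕ,
            ENNReal.ofReal (Real.exp (tstar * ((i : ℝ) - j))) *
              (ENNReal.ofReal ((n.choose i : ℝ) * p_a ^ i * (1 - p_a) ^ (n - i)) *
               ENNReal.ofReal ((n.choose j : ℝ) * p_b ^ j * (1 - p_b) ^ (n - j)))) * (1/2) := by
          rw [← ENNReal.tsum_mul_right, ← ENNReal.tsum_mul_right, ← ENNReal.tsum_add]
          refine tsum_congr fun i => ?_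
          rw [← ENNReal.tsum_mul_right, ← ENNReal.tsum_mul_right, ← ENNReal.tsum_add]
      _ = ENNReal.ofReal ((p_a * Real.exp (-tstar) + (1 - p_a)) ^ n *
            (p_b * Real.exp tstar + (1 - p_b)) ^ n) * (1/2) +
          ENNReal.ofReal ((p_a * Real.exp tstar + (1 - p_a)) ^ n *
            (p_b * Real.exp (-tstar) + (1 - p_b)) ^ n) * (1/2) := by
          rw [double_sum_mgf n p_a p_b hpa0.le hpa1.le hpb0.le hpb1.le (-tstar),
            double_sum_mgf n p_a p_b hpa0.le hpa1.le hpb0.le hpb1.le tstar, neg_neg]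
      _ = ENNReal.ofReal C := by
          have hqa' : (0:ℝ) ≤ 1 - p_a := by linarith
          have hqb' : (0:ℝ) ≤ 1 - p_b := by linarith
          have hM1 : 0 ≤ (p_a * Real.exp (-tstar) + (1 - p_a)) ^ n *
              (p_b * Real.exp tstar + (1 - p_b)) ^ n :=
            mul_nonneg (pow_nonneg (add_nonneg (mul_nonneg hpa0.le (Real.exp_pos _).le) hqa') _)
              (pow_nonneg (add_nonneg (mul_nonneg hpb0.le (Real.exp_pos _).le) hqb') _)
          have hM2 : 0 ≤ (p_a * Real.exp tstar + (1 - p_a)) ^ n *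
              (p_b * Real.exp (-tstar) + (1 - p_b)) ^ n :=
            mul_nonneg (pow_nonneg (add_nonneg (mul_nonneg hpa0.le (Real.exp_pos _).le) hqa') _)
              (pow_nonneg (add_nonneg (mul_nonneg hpb0.le (Real.exp_pos _).le) hqb') _)
          have h12 : (1/2 : ENNReal) = ENNReal.ofReal (1/2) := by
            rw [ENNReal.ofReal_div_of_pos two_pos, ENNReal.ofReal_one, ENNReal.ofReal_ofNat]
          rw [h12, ← ENNReal.ofReal_mul hM1, ← ENNReal.ofReal_mul hM2,
            ← ENNReal.ofReal_add (by positivity) (by positivity)]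
          congr 1
          -- now a real identity
          set a := Real.sqrt p_a with ha'
          set b := Real.sqrt p_b with hb'
          set c := Real.sqrt q_a with hc'
          set d := Real.sqrt q_b with hd'
          have ha : a ^ 2 = p_a := Real.sq_sqrt hpa0.le
          have hb : b ^ 2 = p_b := Real.sq_sqrt hpb0.le
          have hc : c ^ 2 = q_a := Real.sq_sqrt hqa0.le
          have hd : d ^ 2 = q_b := Real.sq_sqrt hqb0.le
          have ha0 : 0 < a := Real.sqrt_pos.mpr hpa0
          have hb0 : 0 < b := Real.sqrt_pos.mpr hpb0
          have hc0 : 0 < c := Real.sqrt_pos.mpr hqa0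
          have hd0 : 0 < d := Real.sqrt_pos.mpr hqb0
          have hsq : p_a * q_b / (q_a * p_b) = (a * d / (c * b)) ^ 2 := by
            rw [div_pow, mul_pow, mul_pow, ha, hd, hc, hb]
          have he : Real.exp tstar = a * d / (c * b) := by
            rw [htstar, mul_comm (1/2 : ℝ), ← Real.rpow_def_of_pos (by positivity),
              ← Real.sqrt_eq_rpow, hsq, Real.sqrt_sq (by positivity)]
          have hen : Real.exp (-tstar) = c * b / (a * d) := by
            rw [Real.exp_neg, he, inv_div]
          have h1 : Real.sqrt (p_a * p_b) = a * b := by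
            rw [show p_a * p_b = (a * b) ^ 2 by rw [mul_pow, ha, hb],
              Real.sqrt_sq (by positivity)]
          have h2 : Real.sqrt (q_a * q_b) = c * d := by
            rw [show q_a * q_b = (c * d) ^ 2 by rw [mul_pow, hc, hd],
              Real.sqrt_sq (by positivity)]
          have h3 : Real.sqrt (q_a ^ 3 * p_b ^ 3 / (p_a * q_b)) = c ^ 3 * b ^ 3 / (a * d) := by
            rw [show q_a ^ 3 * p_b ^ 3 / (p_a * q_b) = (c ^ 3 * b ^ 3 / (a * d)) ^ 2 by
              rw [← ha, ← hb, ← hc, ← hd]; field_simp,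
              Real.sqrt_sq (by positivity)]
          have h4 : Real.sqrt (p_a ^ 3 * q_b ^ 3 / (q_a * p_b)) = a ^ 3 * d ^ 3 / (c * b) := by
            rw [show p_a ^ 3 * q_b ^ 3 / (q_a * p_b) = (a ^ 3 * d ^ 3 / (c * b)) ^ 2 by
              rw [← ha, ← hb, ← hc, ← hd]; field_simp,
              Real.sqrt_sq (by positivity)]
          rw [hC, h1, h2, h3, h4, he, hen, show (1 : ℝ) - p_a = q_a from hqa.symm,
            show (1 : ℝ) - p_b = q_b from hqb.symm, ← ha, ← hb, ← hc, ← hd,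
            pow_mul, ← mul_pow, ← mul_pow]
          have e1 : (a ^ 2 * (c * b / (a * d)) + c ^ 2) * (b ^ 2 * (a * d / (c * b)) + d ^ 2)
              = (a * b + c * d) ^ 2 := by
            field_simp
          have e2 : (a ^ 2 * (a * d / (c * b)) + c ^ 2) * (b ^ 2 * (c * b / (a * d)) + d ^ 2)
              = c ^ 3 * b ^ 3 / (a * d) + a ^ 3 * d ^ 3 / (c * b) + c ^ 2 * d ^ 2 + a ^ 2 * b ^ 2 := by
            field_simp
            ring
          rw [e1, e2]
          ring
  refine le_trans step1 ?_
  rw [hint, ← ENNReal.ofReal_div_of_pos (Real.exp_pos _)]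
  apply le_of_eq
  congr 1
  rw [Real.exp_neg, div_eq_mul_inv, mul_comm s tstar]
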